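/- If the MH kernel $K$ is $\phi$-irreducible for a $\sigma$-finite measure $\phi$ on $(G,\mathcal G)$, then the augmented MH kernel $K_{\mathrm{aug}}$ is $\phi_P$-irreducible on $G\times G$, where $\phi_P(dx\,dy) = P(x,dy)\phi(dx)$. That is, for every $A \in \mathcal G\otimes\mathcal G$ with $\phi_P(A) > 0$ and every $(x,y) \in G\times G$ there exists $n \in \mathbb N$ with $K_{\mathrm{aug}}^n((x,y),A) > 0$. -/

import Mathlib

open MeasureTheory ProbabilityTheory ENNReal Filter

lemma markov_aux {α : Type*} [MeasurableSpace α] (κ : Kernel α α) [IsMarkovKernel κ]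
    (F : ℕ → Kernel α α) (h1 : F 1 = κ)
    (hs : ∀ n, 1 ≤ n → F (n + 1) = κ ∘ₖ F n) :
    ∀ n, 1 ≤ n → IsMarkovKernel (F n) := by
  intro n hn
  induction n with
  | zero => omega
  | succ k ih =>
    rcases Nat.eq_zero_or_pos k with hk | hk
    · subst hk; rw [h1]; infer_instance
    · haveI := ih hk
      rw [hs k hk]
      infer_instance

lemma pow_comm_aux {α : Type*} [MeasurableSpace α] (κ : Kernel α α) [IsSFiniteKernel κ]
    (F : ℕ → Kernel α α) (h1 : F 1 = κ)
    (hs : ∀ n, 1 ≤ n → F (n + 1) = κ ∘ₖ F n) :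
    ∀ n, 1 ≤ n → F (n + 1) = F n ∘ₖ κ := by
  intro n hn
  induction n with
  | zero => omega
  | succ k ih =>
    rcases Nat.eq_zero_or_pos k with hk | hk
    · subst hk; rw [hs 1 le_rfl, h1]
    · have h2 := hs (k + 1) (by omega)
      rw [ih hk] at h2
      rw [h2, ← Kernel.comp_assoc, ← hs k hk]

/-- If the MH kernel K is φ-irreducible then the augmented MH
kernel is φ_P-irreducible, where φ_P(dx dy) = P(x,dy) φ(dx). -/
theorem Kaug_irreducible
    {G : Type*} [MeasurableSpace G]
    (μ₀ : Measure G) [SigmaFinite μ₀]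
    (ρ : G → ℝ) (hρm : Measurable ρ) (hρ0 : ∀ x, 0 ≤ ρ x) (hρint : Integrable ρ μ₀)
    (Z : ℝ) (hZ : Z = ∫ x, ρ x ∂μ₀) (hZpos : 0 < Z)
    (μ : Measure G) [SFinite μ]
    (hμ : μ = μ₀.withDensity fun x => ENNReal.ofReal (ρ x / Z))
    (P : Kernel G G) [IsMarkovKernel P]
    (p : G → G → ℝ) (hpm : Measurable (Function.uncurry p)) (hp0 : ∀ x y, 0 ≤ p x y)
    (hP : ∀ x, P x = μ₀.withDensity fun y => ENNReal.ofReal (p x y))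
    (hpos : ∀ x y, 0 < ρ y → 0 < p x y)
    (bar : G → G → ℝ) (hbar : ∀ x y, bar x y = if 0 < ρ y then ρ y / p x y else 0)
    (r : G → G → ℝ)
    (hr : ∀ x y, r x y = if 0 < ρ x * p x y then ρ y * p y x / (ρ x * p x y) else 1)
    (α : G → G → ℝ) (hα : ∀ x y, α x y = min 1 (r x y))
    (K : Kernel G G) [IsMarkovKernel K]
    (hK : ∀ x, K x = (P x).withDensity (fun y => ENNReal.ofReal (α x y)) +
      ENNReal.ofReal (∫ y, (1 - α x y) ∂(P x)) • Measure.dirac x)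
    (Kaug : Kernel (G × G) (G × G)) [IsMarkovKernel Kaug]
    (hKaug : ∀ x y, Kaug (x, y) =
      ENNReal.ofReal (α x y) • ((Measure.dirac y).prod (P y)) +
      ENNReal.ofReal (1 - α x y) • ((Measure.dirac x).prod (P x)))
    (KP : ℕ → Kernel G G) (hKP1 : KP 1 = K)
    (hKPs : ∀ n, 1 ≤ n → KP (n + 1) = K ∘ₖ KP n)
    (KaugP : ℕ → Kernel (G × G) (G × G)) (hKaugP1 : KaugP 1 = Kaug)
    (hKaugPs : ∀ n, 1 ≤ n → KaugP (n + 1) = Kaug ∘ₖ KaugP n)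
    (φ : Measure G) [SigmaFinite φ]
    (hirr : ∀ A : Set G, MeasurableSet A → 0 < φ A →
      ∀ x : G, ∃ n, 1 ≤ n ∧ 0 < KP n x A) :
    ∀ A : Set (G × G), MeasurableSet A → 0 < (φ.compProd P) A →
      ∀ q : G × G, ∃ n, 1 ≤ n ∧ 0 < KaugP n q A := by
  classical
  intro A hA hApos q
  obtain ⟨x, y⟩ := q
  -- measurability of α
  have hαm : Measurable (Function.uncurry α) := by
    have heq : Function.uncurry α = fun q : G × G =>
        min 1 (if 0 < ρ q.1 * p q.1 q.2 then ρ q.2 * p q.2 q.1 / (ρ q.1 * p q.1 q.2) else 1) := by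
      funext q; simp only [Function.uncurry]; rw [hα, hr]
    rw [heq]
    apply measurable_const.min
    have h1 : Measurable fun q : G × G => ρ q.1 * p q.1 q.2 :=
      (hρm.comp measurable_fst).mul hpm
    have h2 : Measurable fun q : G × G => ρ q.2 * p q.2 q.1 :=
      (hρm.comp measurable_snd).mul (hpm.comp measurable_swap)
    exact Measurable.ite (measurableSet_lt measurable_const h1) (h2.div h1) measurable_const
  have hα0 : ∀ a b, 0 ≤ α a b := by
    intro a b
    rw [hα]
    refine le_min zero_le_one ?_
    rw [hr]
    split_ifs with h
    · exact div_nonneg (mul_nonneg (hρ0 b) (hp0 b a)) h.le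
    · exact zero_le_one
  have hα1 : ∀ a b, α a b ≤ 1 := fun a b => by rw [hα]; exact min_le_left _ _
  -- the key one-step identity
  have hstep : ∀ (z : G) (f : G → ℝ≥0∞), Measurable f →
      ∫⁻ w, (ENNReal.ofReal (α z w) * f w + ENNReal.ofReal (1 - α z w) * f z) ∂(P z)
        = ∫⁻ u, f u ∂(K z) := by
    intro z f hf
    have hαzm : Measurable fun w => α z w := hαm.comp measurable_prodMk_left
    have hint : Integrable (fun w => 1 - α z w) (P z) := by
      refine ⟨(measurable_const.sub hαzm).aestronglyMeasurable, ?_⟩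
      refine HasFiniteIntegral.of_bounded (C := 1) ?_
      filter_upwards with w
      rw [Real.norm_eq_abs, abs_of_nonneg (by linarith [hα1 z w])]
      linarith [hα0 z w]
    have hofReal : ENNReal.ofReal (∫ w, (1 - α z w) ∂(P z))
        = ∫⁻ w, ENNReal.ofReal (1 - α z w) ∂(P z) := by
      rw [ofReal_integral_eq_lintegral_ofReal hint]
      filter_upwards with w
      simp only [Pi.zero_apply]
      linarith [hα1 z w]
    rw [hK z, lintegral_add_measure, lintegral_smul_measure, lintegral_dirac' _ hf,
        lintegral_withDensity_eq_lintegral_mul _ hαzm.ennreal_ofReal hf,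
        hofReal,
        lintegral_add_left (f := fun w => ENNReal.ofReal (α z w) * f w) (hαzm.ennreal_ofReal.mul hf),
        lintegral_mul_const (f := fun w => ENNReal.ofReal (1 - α z w)) _ (measurable_const.sub hαzm).ennreal_ofReal]
    simp only [Pi.mul_apply, smul_eq_mul]
  -- the section mass function
  have hm : Measurable fun u => P u (Prod.mk u ⁻¹' A) :=
    Kernel.measurable_kernel_prodMk_left hA
  set m : G → ℝ≥0∞ := fun u => P u (Prod.mk u ⁻¹' A) with hm_def
  have hprod : ∀ u, ((Measure.dirac u).prod (P u)) A = m u := fun u => by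
    rw [Measure.dirac_prod, Measure.map_apply measurable_prodMk_left hA]
  have hKaugc := pow_comm_aux Kaug KaugP hKaugP1 hKaugPs
  have hKc := pow_comm_aux K KP hKP1 hKPs
  -- main induction
  have hmain : ∀ n z, 1 ≤ n →
      ∫⁻ w, KaugP n (z, w) A ∂(P z) = ∫⁻ u, m u ∂(KP n z) := by
    intro n
    induction n with
    | zero => intro z h; omega
    | succ k ih =>
      intro z _
      rcases Nat.eq_zero_or_pos k with hk | hk
      · subst hk
        rw [hKaugP1, hKP1]
        calc ∫⁻ w, Kaug (z, w) A ∂(P z)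
            = ∫⁻ w, (ENNReal.ofReal (α z w) * m w + ENNReal.ofReal (1 - α z w) * m z)
                ∂(P z) := by
              refine lintegral_congr fun w => ?_
              rw [hKaug z w]
              simp [Measure.add_apply, Measure.smul_apply, hprod, smul_eq_mul]
          _ = ∫⁻ u, m u ∂(K z) := hstep z m hm
      · haveI : IsMarkovKernel (KP k) := markov_aux K KP hKP1 hKPs k hk
        have hg : Measurable fun u => ∫⁻ u', m u' ∂(KP k u) := hm.lintegral_kernel
        have hF : Measurable fun q : G × G => KaugP k q A := Kernel.measurable_coe _ hA
        have e2 : ∀ u : G, ∫⁻ q', KaugP k q' A ∂((Measure.dirac u).prod (P u))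
            = ∫⁻ u', m u' ∂(KP k u) := by
          intro u
          rw [Measure.dirac_prod, lintegral_map hF measurable_prodMk_left]
          exact ih u hk
        have e3 : ∀ w, KaugP (k + 1) (z, w) A
            = ENNReal.ofReal (α z w) * (∫⁻ u', m u' ∂(KP k w))
              + ENNReal.ofReal (1 - α z w) * (∫⁻ u', m u' ∂(KP k z)) := by
          intro w
          rw [hKaugc k hk, Kernel.comp_apply' _ _ _ hA, hKaug z w,
              lintegral_add_measure, lintegral_smul_measure, lintegral_smul_measure,
              e2 w, e2 z]
          simp only [smul_eq_mul]
        calc ∫⁻ w, KaugP (k + 1) (z, w) A ∂(P z)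
            = ∫⁻ w, (ENNReal.ofReal (α z w) * (∫⁻ u', m u' ∂(KP k w))
              + ENNReal.ofReal (1 - α z w) * (∫⁻ u', m u' ∂(KP k z))) ∂(P z) :=
              lintegral_congr e3
          _ = ∫⁻ u, (∫⁻ u', m u' ∂(KP k u)) ∂(K z) := hstep z _ hg
          _ = ∫⁻ u, m u ∂(KP (k + 1) z) := by
              rw [hKc k hk, Kernel.lintegral_comp _ _ _ hm]
  -- expansion of (n+1)-step augmented kernel
  have hexp : ∀ n, 1 ≤ n → ∀ a b : G, KaugP (n + 1) (a, b) A
      = ENNReal.ofReal (α a b) * (∫⁻ u, m u ∂(KP n b))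
        + ENNReal.ofReal (1 - α a b) * (∫⁻ u, m u ∂(KP n a)) := by
    intro n hn a b
    have hF : Measurable fun q : G × G => KaugP n q A := Kernel.measurable_coe _ hA
    rw [hKaugc n hn, Kernel.comp_apply' _ _ _ hA, hKaug a b,
        lintegral_add_measure, lintegral_smul_measure, lintegral_smul_measure,
        Measure.dirac_prod, Measure.dirac_prod,
        lintegral_map hF measurable_prodMk_left, lintegral_map hF measurable_prodMk_left,
        hmain n b hn, hmain n a hn]
    simp only [smul_eq_mul]
  -- the support set has positive φ-measure
  rw [Measure.compProd_apply hA] at hApos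
  have hBmeas : MeasurableSet (Function.support m) := measurableSet_support hm
  have hB : 0 < φ (Function.support m) := (lintegral_pos_iff_support hm).mp hApos
  by_cases hcase : α x y < 1
  · obtain ⟨n, hn1, hnB⟩ := hirr _ hBmeas hB x
    refine ⟨n + 1, by omega, ?_⟩
    have hposint : 0 < ∫⁻ u, m u ∂(KP n x) := (lintegral_pos_iff_support hm).mpr hnB
    rw [hexp n hn1 x y]
    have hc : 0 < ENNReal.ofReal (1 - α x y) := by
      rw [ENNReal.ofReal_pos]; linarith
    calc (0 : ℝ≥0∞) < ENNReal.ofReal (1 - α x y) * ∫⁻ u, m u ∂(KP n x) :=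
          ENNReal.mul_pos hc.ne' hposint.ne'
      _ ≤ _ := le_add_self
  · obtain ⟨n, hn1, hnB⟩ := hirr _ hBmeas hB y
    refine ⟨n + 1, by omega, ?_⟩
    have hposint : 0 < ∫⁻ u, m u ∂(KP n y) := (lintegral_pos_iff_support hm).mpr hnB
    rw [hexp n hn1 x y]
    have hc : 0 < ENNReal.ofReal (α x y) := by
      rw [ENNReal.ofReal_pos]
      have := not_lt.mp hcase
      linarith
    calc (0 : ℝ≥0∞) < ENNReal.ofReal (α x y) * ∫⁻ u, m u ∂(KP n y) :=
          ENNReal.mul_pos hc.ne' hposint.ne'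
      _ ≤ _ := le_self_add
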